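/- Let A be a unital semisimple commutative Banach algebra, B a unital commutative Banach algebra, and S : A → B a surjective map such that r(SfSg − α) = r(fg − α) for all f, g ∈ A and some fixed nonzero complex number α, with B semisimple. Then S maps A⁻¹ onto B⁻¹. -/
import Mathlib

theorem stmt18 {A B : Type*} [NormedCommRing A] [NormedAlgebra ℂ A] [CompleteSpace A]
    [NormedCommRing B] [NormedAlgebra ℂ B] [CompleteSpace B]
    (hA : ∀ a : A, spectralRadius ℂ a = 0 → a = 0)
    (hB : ∀ b : B, spectralRadius ℂ b = 0 → b = 0)
    (S : A → B) (hsurj : Function.Surjective S)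
    (α : ℂ) (hα : α ≠ 0)
    (h : ∀ f g : A, spectralRadius ℂ (S f * S g - algebraMap ℂ B α)
        = spectralRadius ℂ (f * g - algebraMap ℂ A α)) :
    S '' {a : A | IsUnit a} = {b : B | IsUnit b} := by
  have hαA : IsUnit (algebraMap ℂ A α) := (IsUnit.mk0 α hα).map (algebraMap ℂ A)
  have hαB : IsUnit (algebraMap ℂ B α) := (IsUnit.mk0 α hα).map (algebraMap ℂ B)
  ext b
  simp only [Set.mem_image, Set.mem_setOf_eq]
  constructor
  · rintro ⟨f, hf, rfl⟩
    obtain ⟨u, rfl⟩ := hf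
    set g : A := α • (↑u⁻¹ : A) with hgdef
    have hfg : (↑u : A) * g = algebraMap ℂ A α := by
      rw [hgdef, Algebra.mul_smul_comm, Units.mul_inv, Algebra.algebraMap_eq_smul_one]
    have h0 : spectralRadius ℂ (S ↑u * S g - algebraMap ℂ B α) = 0 := by
      rw [h, hfg, sub_self, spectrum.spectralRadius_zero]
    have := hB _ h0
    have heq : S ↑u * S g = algebraMap ℂ B α := by
      have := sub_eq_zero.mp this; exact this
    exact isUnit_of_mul_isUnit_left (heq ▸ hαB)
  · intro hb
    obtain ⟨f, rfl⟩ := hsurj b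
    obtain ⟨u, hu⟩ := hb
    obtain ⟨g, hg⟩ := hsurj (α • (↑u⁻¹ : B))
    have hfg : S f * S g = algebraMap ℂ B α := by
      rw [hg, ← hu, Algebra.mul_smul_comm, Units.mul_inv, Algebra.algebraMap_eq_smul_one]
    have h0 : spectralRadius ℂ (f * g - algebraMap ℂ A α) = 0 := by
      rw [← h, hfg, sub_self, spectrum.spectralRadius_zero]
    have heq : f * g = algebraMap ℂ A α := sub_eq_zero.mp (hA _ h0)
    exact ⟨f, isUnit_of_mul_isUnit_left (heq ▸ hαA), rfl⟩
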